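/- Let f ∈ ℂ[x₀,…,x₄] be homogeneous of degree 3 whose partial derivatives have no common zero in ℂ⁵ other than the origin, and set v₁ = (∂f/∂x₁) ∂/∂x₀ − (∂f/∂x₀) ∂/∂x₁ + (∂f/∂x₃) ∂/∂x₂ − (∂f/∂x₂) ∂/∂x₃. Let ω be a polynomial 1-form on ℂ⁵ whose coefficients are homogeneous of degree 2 and which satisfies ι_𝓡 ω = 0. If ι_{v₁}(dω) = 0, then dω = 0 and consequently ω = 0. -/

import Mathlib

open MvPolynomial Finset


abbrev P5 := MvPolynomial (Fin 5) ℂ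

lemma degree_eq_sum_univ (d : Fin 5 →₀ ℕ) : d.degree = ∑ j : Fin 5, d j :=
  Finset.sum_subset (Finset.subset_univ _) (fun i _ hi => Finsupp.notMem_support_iff.mp hi)

lemma isHom_degree {p : P5} {n : ℕ} (hp : p.IsHomogeneous n) {d : Fin 5 →₀ ℕ}
    (h : coeff d p ≠ 0) : d.degree = n := by
  have := hp h
  rwa [Finsupp.degree_eq_weight_one]

lemma X_mul_monomial' (i : Fin 5) (s : Fin 5 →₀ ℕ) (c : ℂ) :
    (X i : P5) * monomial s c = monomial (Finsupp.single i 1 + s) c := by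
  have : (X i : P5) = monomial (Finsupp.single i 1) 1 := rfl
  rw [this, monomial_mul, one_mul]

lemma sub_single_apply (m : Fin 5 →₀ ℕ) (i j : Fin 5) :
    (m - Finsupp.single i 1 : Fin 5 →₀ ℕ) j = m j - (if j = i then 1 else 0) := by
  rw [Finsupp.tsub_apply, Finsupp.single_apply]
  simp only [eq_comm]

lemma single_add_sub (m : Fin 5 →₀ ℕ) (i : Fin 5) (h : m i ≠ 0) :
    Finsupp.single i 1 + (m - Finsupp.single i 1) = m := by
  ext j
  rw [Finsupp.add_apply, sub_single_apply, Finsupp.single_apply]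
  rcases eq_or_ne j i with rfl | hji
  · simp; omega
  · simp [hji, Ne.symm hji]

lemma sum_sub_single (m : Fin 5 →₀ ℕ) (i : Fin 5) (h : m i ≠ 0) :
    ∑ j : Fin 5, (m - Finsupp.single i 1 : Fin 5 →₀ ℕ) j = (∑ j : Fin 5, m j) - 1 := by
  simp only [sub_single_apply]
  rw [Fin.sum_univ_five, Fin.sum_univ_five]
  fin_cases i <;> simp_all <;> omega

lemma single_of_degree_one (d : Fin 5 →₀ ℕ) (hd : d.degree = 1) :
    ∃ i, d = Finsupp.single i 1 := by
  classical
  rw [degree_eq_sum_univ] at hd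
  have h1 : ∃ i, d i ≠ 0 := by
    by_contra h
    push_neg at h
    simp [h] at hd
  obtain ⟨i, hi⟩ := h1
  refine ⟨i, ?_⟩
  have h2 : d i + ∑ x ∈ Finset.univ.erase i, d x = 1 :=
    (Finset.add_sum_erase Finset.univ (fun j => d j) (Finset.mem_univ i)).trans hd
  have hdi : d i = 1 ∧ ∑ x ∈ Finset.univ.erase i, d x = 0 := by
    constructor <;> omega
  have hz : ∀ j ∈ Finset.univ.erase i, d j = 0 :=
    Finset.sum_eq_zero_iff.mp hdi.2
  ext j
  rcases eq_or_ne j i with rfl | hji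
  · simp [hdi.1]
  · have := hz j (Finset.mem_erase.mpr ⟨hji, Finset.mem_univ j⟩)
    simp [this, Finsupp.single_apply, (Ne.symm hji)]

lemma linear_eq_sum_coeff {p : P5} (hp : p.IsHomogeneous 1) :
    p = ∑ k : Fin 5, C (coeff (Finsupp.single k 1) p) * X k := by
  classical
  apply MvPolynomial.ext
  intro d
  rw [MvPolynomial.coeff_sum]
  simp only [coeff_C_mul, coeff_X']
  by_cases hd : ∃ k, d = Finsupp.single k 1
  · obtain ⟨k, rfl⟩ := hd
    rw [Finset.sum_eq_single k]
    · simp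
    · intro b _ hb
      have : ¬ (Finsupp.single b 1 = Finsupp.single k 1) := by
        intro h
        exact hb (Finsupp.single_left_injective one_ne_zero h)
      simp [this]
    · simp
  · push_neg at hd
    have h0 : coeff d p = 0 := by
      by_contra hc
      obtain ⟨i, hi⟩ := single_of_degree_one d (isHom_degree hp hc)
      exact hd i hi
    rw [h0]
    symm
    apply Finset.sum_eq_zero
    intro k _
    have : ¬ (Finsupp.single k 1 = d) := fun h => hd k h.symm
    simp [this]

lemma pderiv_isHomogeneous {p : P5} {n : ℕ} (hp : p.IsHomogeneous (n+1)) (i : Fin 5) :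
    (pderiv i p).IsHomogeneous n := by
  classical
  nth_rewrite 1 [as_sum p]
  rw [map_sum]
  apply IsHomogeneous.sum
  intro m hm
  rw [pderiv_monomial]
  rcases Nat.eq_zero_or_pos (m i) with h0 | hpos
  · rw [h0]
    norm_num
    exact isHomogeneous_zero _ _ _
  · apply isHomogeneous_monomial
    have hdeg : m.degree = n + 1 := isHom_degree hp (MvPolynomial.mem_support_iff.mp hm)
    rw [degree_eq_sum_univ] at hdeg ⊢
    rw [sum_sub_single m i (by omega), hdeg]
    omega


lemma euler {p : P5} {n : ℕ} (hp : p.IsHomogeneous n) :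
    ∑ i : Fin 5, X i * pderiv i p = C (n : ℂ) * p := by
  classical
  have hps := as_sum p
  nth_rewrite 1 [hps]
  nth_rewrite 3 [hps]
  rw [Finset.mul_sum]
  simp_rw [map_sum, Finset.mul_sum]
  rw [Finset.sum_comm]
  refine Finset.sum_congr rfl fun m hm => ?_
  have hdeg : m.degree = n := isHom_degree hp (MvPolynomial.mem_support_iff.mp hm)
  set c := coeff m p with hc
  have hterm : ∀ i : Fin 5, X i * pderiv i (monomial m c) = monomial m (c * m i) := by
    intro i
    rw [pderiv_monomial, X_mul_monomial']
    rcases Nat.eq_zero_or_pos (m i) with h0 | hpos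
    · rw [h0]; norm_num
    · rw [single_add_sub m i (by omega)]
  rw [Finset.sum_congr rfl (fun i _ => hterm i)]
  rw [← map_sum (monomial m), ← Finset.mul_sum, C_mul_monomial]
  congr 1
  rw [← Nat.cast_sum, ← degree_eq_sum_univ, hdeg]
  ring

lemma pderiv_comm (i j : Fin 5) (p : P5) :
    pderiv i (pderiv j p) = pderiv j (pderiv i p) := by
  classical
  induction p using MvPolynomial.induction_on' with
  | add p q hp hq => simp [map_add, hp, hq]
  | monomial m c =>
    rcases eq_or_ne i j with rfl | hij
    · rfl
    · rw [pderiv_monomial, pderiv_monomial, pderiv_monomial, pderiv_monomial]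
      have h1 : (m - Finsupp.single j 1 : Fin 5 →₀ ℕ) i = m i := by
        rw [sub_single_apply]; simp [hij]
      have h2 : (m - Finsupp.single i 1 : Fin 5 →₀ ℕ) j = m j := by
        rw [sub_single_apply]; simp [Ne.symm hij]
      rw [h1, h2, tsub_right_comm]
      ring_nf


open Polynomial in
lemma coeff_prod_of_natDegree_le' {ι : Type*} (s : Finset ι) (q : ι → Polynomial ℂ) (b : ι → ℕ)
    (h : ∀ i ∈ s, (q i).natDegree ≤ b i) :
    (∏ i ∈ s, q i).coeff (∑ i ∈ s, b i) = ∏ i ∈ s, (q i).coeff (b i) := by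
  classical
  induction s using Finset.cons_induction with
  | empty => simp
  | cons a s ha ih =>
    rw [Finset.prod_cons, Finset.sum_cons, Polynomial.coeff_mul_add_eq_of_natDegree_le
        (h a (Finset.mem_cons_self a s))
        ((Polynomial.natDegree_prod_le s q).trans
          (Finset.sum_le_sum (fun i hi => h i (Finset.mem_cons_of_mem hi)))),
      Finset.prod_cons, ih (fun i hi => h i (Finset.mem_cons_of_mem hi))]

/-- Top-coefficient extraction: if `p` is homogeneous of degree `d` and each `γ i` has
`natDegree ≤ k`, the coefficient of `t^(d*k)` in `p(γ)` is `p` evaluated at the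
`k`-th coefficients. -/
lemma coeff_aeval_of_isHomogeneous (γ : Fin 5 → Polynomial ℂ) (k : ℕ)
    (hγ : ∀ i, (γ i).natDegree ≤ k) {p : P5} {d : ℕ} (hp : p.IsHomogeneous d) :
    (MvPolynomial.aeval γ p).coeff (d * k) = MvPolynomial.eval (fun i => (γ i).coeff k) p := by
  classical
  have hps := as_sum p
  nth_rewrite 1 [hps]
  nth_rewrite 3 [hps]
  rw [map_sum, map_sum, Polynomial.finset_sum_coeff]
  refine Finset.sum_congr rfl fun m hm => ?_
  have hdeg : m.degree = d := isHom_degree hp (MvPolynomial.mem_support_iff.mp hm)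
  rw [MvPolynomial.aeval_monomial, MvPolynomial.eval_monomial]
  have hprod : (m.prod fun i e => γ i ^ e) = ∏ i : Fin 5, γ i ^ m i :=
    Finsupp.prod_fintype m _ (fun i => pow_zero (γ i))
  have hprod2 : (m.prod fun i e => (fun j => (γ j).coeff k) i ^ e)
      = ∏ i : Fin 5, ((γ i).coeff k) ^ m i :=
    Finsupp.prod_fintype m _ (fun i => pow_zero _)
  rw [hprod, hprod2]
  have hdk : d * k = ∑ i : Fin 5, m i * k := by
    rw [← Finset.sum_mul, ← degree_eq_sum_univ, hdeg]
  rw [Polynomial.algebraMap_eq, Polynomial.coeff_C_mul, hdk,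
    coeff_prod_of_natDegree_le' Finset.univ _ (fun i => m i * k)
      (fun i _ => (Polynomial.natDegree_pow_le).trans
        (Nat.mul_le_mul_left (m i) (hγ i)))]
  congr 1
  exact Finset.prod_congr rfl fun i _ => Polynomial.coeff_pow_of_natDegree_le (hγ i)

/-- Chain rule for `aeval` into single-variable polynomials. -/
lemma derivative_aeval (γ : Fin 5 → Polynomial ℂ) (p : P5) :
    Polynomial.derivative (MvPolynomial.aeval γ p) =
      ∑ i : Fin 5, MvPolynomial.aeval γ (pderiv i p) * Polynomial.derivative (γ i) := by
  classical
  induction p using MvPolynomial.induction_on with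
  | C a => simp
  | add p q hp hq =>
    simp only [map_add, hp, hq, add_mul, Finset.sum_add_distrib]
  | mul_X p i hp =>
    rw [map_mul, MvPolynomial.aeval_X, Polynomial.derivative_mul, hp]
    have hterm : ∀ j : Fin 5, MvPolynomial.aeval γ (pderiv j (p * X i)) * Polynomial.derivative (γ j)
        = MvPolynomial.aeval γ (pderiv j p) * Polynomial.derivative (γ j) * γ i
          + (if j = i then MvPolynomial.aeval γ p * Polynomial.derivative (γ i) else 0) := by
      intro j
      rw [pderiv_mul, map_add, map_mul, map_mul, MvPolynomial.aeval_X, add_mul]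
      congr 1
      · ring
      · rcases eq_or_ne j i with rfl | hji
        · rw [pderiv_X_self, if_pos rfl, map_one]
          ring
        · rw [pderiv_X_of_ne (Ne.symm hji), if_neg hji, map_zero, mul_zero, zero_mul]
    rw [Finset.sum_congr rfl (fun j _ => hterm j), Finset.sum_add_distrib]
    congr 1
    · rw [← Finset.sum_mul]
    · rw [Finset.sum_ite_eq' Finset.univ i, if_pos (Finset.mem_univ i)]


section Spectral

/-- The "eigenvalue" set of a matrix, via determinants. -/
def specSet (M : Matrix (Fin 5) (Fin 5) ℂ) : Set ℂ := {lam : ℂ | (M - lam • 1).det = 0}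

lemma sub_smul_one_mulVec (M : Matrix (Fin 5) (Fin 5) ℂ) (lam : ℂ) (v : Fin 5 → ℂ) :
    (M - lam • 1).mulVec v = M.mulVec v - lam • v := by
  rw [Matrix.sub_mulVec, Matrix.smul_mulVec, Matrix.one_mulVec]

lemma hasEigen_of_specSet {M : Matrix (Fin 5) (Fin 5) ℂ} {lam : ℂ} (h : lam ∈ specSet M) :
    Module.End.HasEigenvalue (Matrix.toLinAlgEquiv' M : Module.End ℂ (Fin 5 → ℂ)) lam := by
  obtain ⟨v, hv, hMv⟩ := Matrix.exists_mulVec_eq_zero_iff.mpr h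
  rw [sub_smul_one_mulVec] at hMv
  have hv' : M.mulVec v = lam • v := sub_eq_zero.mp hMv
  exact Module.End.hasEigenvalue_of_hasEigenvector
    ⟨Module.End.mem_eigenspace_iff.mpr (by simpa [Matrix.toLinAlgEquiv'_apply] using hv'), hv⟩

lemma specSet_of_eigenvector {M : Matrix (Fin 5) (Fin 5) ℂ} {lam : ℂ} {v : Fin 5 → ℂ}
    (hv : v ≠ 0) (h : M.mulVec v = lam • v) : lam ∈ specSet M := by
  apply Matrix.exists_mulVec_eq_zero_iff.mp
  exact ⟨v, hv, by rw [sub_smul_one_mulVec, h, sub_self]⟩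

lemma specSet_finite (M : Matrix (Fin 5) (Fin 5) ℂ) : (specSet M).Finite := by
  have hint : IsIntegral ℂ (Matrix.toLinAlgEquiv' M : Module.End ℂ (Fin 5 → ℂ)) :=
    Algebra.IsIntegral.isIntegral _
  apply Set.Finite.subset (Polynomial.finite_setOf_isRoot (minpoly.ne_zero hint))
  intro lam hl
  exact Module.End.hasEigenvalue_iff_isRoot.mp (hasEigen_of_specSet hl)

lemma exists_pow_eq_zero_of_spec (M : Matrix (Fin 5) (Fin 5) ℂ)
    (h : ∀ lam : ℂ, lam ∈ specSet M → lam = 0) : ∃ N, M ^ N = 0 := by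
  set T : Module.End ℂ (Fin 5 → ℂ) := (Matrix.toLinAlgEquiv' M : Module.End ℂ (Fin 5 → ℂ)) with hT
  have hint : IsIntegral ℂ T := Algebra.IsIntegral.isIntegral _
  have h1 : (minpoly ℂ T).Monic := minpoly.monic hint
  have h2 : Polynomial.Splits (minpoly ℂ T) :=
    IsAlgClosed.splits (minpoly ℂ T)
  have h4 : ∀ a ∈ (minpoly ℂ T).roots, a = 0 := by
    intro a ha
    apply h
    have hroot : (minpoly ℂ T).IsRoot a := Polynomial.isRoot_of_mem_roots ha
    have heig := Module.End.hasEigenvalue_iff_isRoot.mpr hroot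
    obtain ⟨v, hv⟩ := heig.exists_hasEigenvector
    have hv1 : T v = a • v := Module.End.mem_eigenspace_iff.mp hv.1
    refine specSet_of_eigenvector hv.2 ?_
    rw [← hv1]
    simp [hT, Matrix.toLinAlgEquiv'_apply]
  have h5 : minpoly ℂ T = Polynomial.X ^ Multiset.card (minpoly ℂ T).roots := by
    have h3 := h2.eq_prod_roots_of_monic h1
    have hmap : Multiset.map (fun a => Polynomial.X - Polynomial.C a) (minpoly ℂ T).roots
        = Multiset.map (fun _ => (Polynomial.X : Polynomial ℂ)) (minpoly ℂ T).roots := by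
      apply Multiset.map_congr rfl
      intro a ha
      rw [h4 a ha, map_zero, sub_zero]
    rw [hmap, Multiset.map_const', Multiset.prod_replicate] at h3
    exact h3
  refine ⟨Multiset.card (minpoly ℂ T).roots, ?_⟩
  have h6 := minpoly.aeval ℂ T
  rw [h5, map_pow, Polynomial.aeval_X] at h6
  apply (Matrix.toLinAlgEquiv' (R := ℂ) (n := Fin 5)).injective
  rw [map_pow, map_zero]
  exact h6

end Spectral


section KeyPrep

lemma pderiv_linear (c : Fin 5 → ℂ) (j : Fin 5) :
    pderiv j (∑ k : Fin 5, MvPolynomial.C (c k) * MvPolynomial.X k : P5)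
      = MvPolynomial.C (c j) := by
  classical
  rw [map_sum]
  rw [Finset.sum_eq_single j]
  · rw [pderiv_C_mul, pderiv_X_self, mul_one]
  · intro b _ hb
    rw [pderiv_C_mul, pderiv_X_of_ne hb, mul_zero]
  · intro h
    exact absurd (Finset.mem_univ j) h

lemma eval_linear (c : Fin 5 → ℂ) (a : Fin 5 → ℂ) :
    MvPolynomial.eval a (∑ k : Fin 5, MvPolynomial.C (c k) * MvPolynomial.X k : P5)
      = ∑ k : Fin 5, c k * a k := by
  rw [map_sum]
  refine Finset.sum_congr rfl fun k _ => ?_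
  rw [map_mul, MvPolynomial.eval_C, MvPolynomial.eval_X]

lemma aeval_linear (γ : Fin 5 → Polynomial ℂ) (c : Fin 5 → ℂ) :
    MvPolynomial.aeval γ (∑ k : Fin 5, MvPolynomial.C (c k) * MvPolynomial.X k : P5)
      = ∑ k : Fin 5, Polynomial.C (c k) * γ k := by
  rw [map_sum]
  refine Finset.sum_congr rfl fun k _ => ?_
  rw [map_mul, MvPolynomial.aeval_X, MvPolynomial.aeval_C, Polynomial.algebraMap_eq]

lemma mulVec_apply' (B : Matrix (Fin 5) (Fin 5) ℂ) (w : Fin 5 → ℂ) (i : Fin 5) :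
    B.mulVec w i = ∑ l : Fin 5, B i l * w l := rfl

end KeyPrep


/-- **Key theorem**: a linear vector field annihilating a smooth cubic must vanish. -/
theorem key (f : P5) (hf : f.IsHomogeneous 3)
    (hsm : ∀ a : Fin 5 → ℂ, a ≠ 0 → ∃ i, MvPolynomial.eval a (pderiv i f) ≠ 0)
    (M : Matrix (Fin 5) (Fin 5) ℂ)
    (hid : ∑ i : Fin 5, (∑ k : Fin 5, MvPolynomial.C (M i k) * MvPolynomial.X k) * pderiv i f
      = 0) :
    M = 0 := by
  classical
  have hg : ∀ j : Fin 5, (pderiv j f).IsHomogeneous 2 := fun j => pderiv_isHomogeneous hf j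
  -- the differentiated identity
  have I1 : ∀ j : Fin 5,
      ∑ i : Fin 5, (MvPolynomial.C (M i j) * pderiv i f
        + (∑ k : Fin 5, MvPolynomial.C (M i k) * MvPolynomial.X k) * pderiv i (pderiv j f))
      = 0 := by
    intro j
    have h0 := congrArg (pderiv j) hid
    rw [map_sum, map_zero] at h0
    rw [← h0]
    refine Finset.sum_congr rfl fun i _ => ?_
    rw [pderiv_mul, pderiv_linear, pderiv_comm]
  -- Step 1 : the spectrum is trivial
  have hspec : ∀ lam : ℂ, lam ∈ specSet M → lam = 0 := by
    have hstep : ∀ lam : ℂ, lam ∈ specSet M → (-2*lam) ∈ specSet M := by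
      intro lam hl
      obtain ⟨v, hv, hMv⟩ := Matrix.exists_mulVec_eq_zero_iff.mpr hl
      rw [sub_smul_one_mulVec] at hMv
      have hv' : M.mulVec v = lam • v := sub_eq_zero.mp hMv
      set q : Fin 5 → ℂ := fun j => MvPolynomial.eval v (pderiv j f) with hq
      have hq0 : q ≠ 0 := by
        obtain ⟨i, hi⟩ := hsm v hv
        intro h0
        exact hi (congrFun h0 i)
      have hMq : Matrix.mulVec M.transpose q = (-2*lam) • q := by
        funext j
        have hI := congrArg (MvPolynomial.eval v) (I1 j)
        rw [map_sum, map_zero] at hI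
        have hterm : ∀ i : Fin 5,
            MvPolynomial.eval v (MvPolynomial.C (M i j) * pderiv i f
              + (∑ k : Fin 5, MvPolynomial.C (M i k) * MvPolynomial.X k)
                  * pderiv i (pderiv j f))
            = M i j * q i + (lam * v i) * MvPolynomial.eval v (pderiv i (pderiv j f)) := by
          intro i
          rw [map_add, map_mul, map_mul, MvPolynomial.eval_C, eval_linear]
          congr 2
          have : ∑ k : Fin 5, M i k * v k = M.mulVec v i := rfl
          rw [this, hv']
          simp
        rw [Finset.sum_congr rfl (fun i _ => hterm i), Finset.sum_add_distrib] at hI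
        -- Euler for the quadric pderiv j f
        have heul := congrArg (MvPolynomial.eval v) (euler (hg j))
        rw [map_sum, map_mul, MvPolynomial.eval_C] at heul
        have heul' : ∑ i : Fin 5, v i * MvPolynomial.eval v (pderiv i (pderiv j f))
            = 2 * q j := by
          have h2 : ∑ i : Fin 5, MvPolynomial.eval v (MvPolynomial.X i * pderiv i (pderiv j f))
              = ∑ i : Fin 5, v i * MvPolynomial.eval v (pderiv i (pderiv j f)) :=
            Finset.sum_congr rfl fun i _ => by rw [map_mul, MvPolynomial.eval_X]
          rw [h2] at heul
          rw [heul]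
          norm_num [hq]
        have hsum2 : ∑ i : Fin 5, (lam * v i) * MvPolynomial.eval v (pderiv i (pderiv j f))
            = lam * (2 * q j) := by
          rw [← heul', Finset.mul_sum]
          refine Finset.sum_congr rfl fun i _ => ?_
          ring
        rw [hsum2] at hI
        have : Matrix.mulVec M.transpose q j = ∑ i : Fin 5, M i j * q i := by
          rw [mulVec_apply']
          refine Finset.sum_congr rfl fun i _ => ?_
          rw [Matrix.transpose_apply]
        rw [this]
        have : ∑ i : Fin 5, M i j * q i = - (lam * (2 * q j)) := by linear_combination hI
        rw [this]
        simp
        ring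
      have hdet := specSet_of_eigenvector hq0 hMq
      -- transfer from the transpose back to M
      unfold specSet at hdet ⊢
      rw [Set.mem_setOf_eq] at hdet ⊢
      rw [← Matrix.det_transpose]
      rw [Matrix.transpose_sub, Matrix.transpose_smul, Matrix.transpose_one]
      exact hdet
    intro lam hl
    by_contra hne
    have hmem : ∀ n : ℕ, ((-2:ℂ))^n * lam ∈ specSet M := by
      intro n
      induction n with
      | zero => simpa using hl
      | succ n ih =>
        have : ((-2:ℂ))^(n+1) * lam = -2 * (((-2:ℂ))^n * lam) := by ring
        rw [this]
        exact hstep _ ih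
    have hinj : Function.Injective (fun n : ℕ => ((-2:ℂ))^n * lam) := by
      intro a b hab
      simp only at hab
      have h2 : ((-2:ℂ))^a = (-2)^b := mul_right_cancel₀ hne hab
      have h3 : ((2:ℝ))^a = (2:ℝ)^b := by
        have := congrArg (‖·‖) h2
        simpa [map_pow] using this
      have h4 : ((2^a : ℕ) : ℝ) = ((2^b : ℕ) : ℝ) := by push_cast; exact h3
      exact Nat.pow_right_injective (le_refl 2) (Nat.cast_injective h4)
    exact absurd (specSet_finite M)
      (Set.infinite_of_injective_forall_mem hinj hmem)
  obtain ⟨N, hN⟩ := exists_pow_eq_zero_of_spec M hspec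
  by_contra hM0
  -- nilpotency exponent
  have hN1 : 1 ≤ N := by
    rcases Nat.eq_zero_or_pos N with rfl | h
    · rw [pow_zero] at hN
      exact absurd hN one_ne_zero
    · exact h
  set k := Nat.findGreatest (fun j => M^j ≠ 0) N with hk
  have hkspec : M^k ≠ 0 :=
    Nat.findGreatest_spec (P := fun j => M^j ≠ 0) hN1 (by simpa using hM0)
  have hk1 : 1 ≤ k :=
    Nat.le_findGreatest (P := fun j => M^j ≠ 0) hN1 (by simpa using hM0)
  have hkN : k ≤ N := Nat.findGreatest_le N
  have hk2 : M^(k+1) = 0 := by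
    rcases eq_or_lt_of_le hkN with heq | hlt
    · have : M^(N+1) = 0 := by rw [pow_succ, hN, zero_mul]
      rwa [heq]
    · have := Nat.findGreatest_is_greatest (P := fun j => M^j ≠ 0) (Nat.lt_succ_self k) hlt
      simpa using this
  -- a vector not killed by M^k
  have hex : ∃ v : Fin 5 → ℂ, (M^k).mulVec v ≠ 0 := by
    by_contra hno
    push_neg at hno
    apply hkspec
    ext i j
    have := congrFun (hno (Pi.single j 1)) i
    rw [Matrix.mulVec_single] at this
    simpa using this
  obtain ⟨v, hav⟩ := hex
  set a : Fin 5 → ℂ := (M^k).mulVec v with haa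
  -- the exponential flow curve
  set γ : Fin 5 → Polynomial ℂ := fun i =>
    ∑ j ∈ Finset.range (k+1),
      Polynomial.C (((j.factorial : ℂ))⁻¹ * ((M^j).mulVec v) i) * Polynomial.X ^ j with hγ
  have hγcoeff : ∀ (i : Fin 5) (m : ℕ),
      (γ i).coeff m = if m ≤ k then ((m.factorial : ℂ))⁻¹ * ((M^m).mulVec v) i else 0 := by
    intro i m
    rw [hγ]
    simp only
    rw [Polynomial.finset_sum_coeff]
    simp only [Polynomial.coeff_C_mul, Polynomial.coeff_X_pow]
    rcases le_or_gt m k with h | h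
    · rw [if_pos h, Finset.sum_eq_single m]
      · rw [if_pos rfl, mul_one]
      · intro b _ hb
        rw [if_neg (Ne.symm hb), mul_zero]
      · intro hm
        exact absurd (Finset.mem_range.mpr (by omega)) hm
    · rw [if_neg (by omega)]
      apply Finset.sum_eq_zero
      intro b hb
      have : b < k + 1 := Finset.mem_range.mp hb
      rw [if_neg (by omega), mul_zero]
  have hγdeg : ∀ i, (γ i).natDegree ≤ k := by
    intro i
    rw [hγ]
    simp only
    apply Polynomial.natDegree_sum_le_of_forall_le
    intro j hj
    refine le_trans (Polynomial.natDegree_C_mul_le _ _) ?_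
    rw [Polynomial.natDegree_X_pow]
    exact Nat.lt_succ_iff.mp (Finset.mem_range.mp hj)
  have hγderiv : ∀ i, Polynomial.derivative (γ i)
      = ∑ l : Fin 5, Polynomial.C (M i l) * γ l := by
    intro i
    apply Polynomial.ext
    intro n
    rw [Polynomial.coeff_derivative, hγcoeff]
    rw [Polynomial.finset_sum_coeff]
    simp only [Polynomial.coeff_C_mul, hγcoeff]
    rcases lt_or_ge n k with h | h
    · rw [if_pos (by omega : n + 1 ≤ k)]
      have hr : ∀ l : Fin 5, M i l * (if n ≤ k then ((n.factorial:ℂ))⁻¹ * ((M^n).mulVec v) l else 0)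
          = ((n.factorial:ℂ))⁻¹ * (M i l * ((M^n).mulVec v) l) := by
        intro l
        rw [if_pos (le_of_lt h)]
        ring
      rw [Finset.sum_congr rfl (fun l _ => hr l), ← Finset.mul_sum]
      have hmv : ∑ l : Fin 5, M i l * ((M^n).mulVec v) l = ((M^(n+1)).mulVec v) i := by
        rw [← mulVec_apply', Matrix.mulVec_mulVec, ← pow_succ']
      rw [hmv]
      have hfac : ((n+1).factorial : ℂ)⁻¹ * ((M^(n+1)).mulVec v) i * ((n:ℂ) + 1)
          = ((n.factorial : ℂ))⁻¹ * ((M^(n+1)).mulVec v) i := by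
        rw [Nat.factorial_succ]
        push_cast
        have h1 : ((n:ℂ) + 1) ≠ 0 := by
          have : ((n + 1 : ℕ) : ℂ) ≠ 0 := Nat.cast_ne_zero.mpr (Nat.succ_ne_zero n)
          push_cast at this
          exact this
        have h2 : ((n.factorial : ℂ)) ≠ 0 := by
          rw [Ne, Nat.cast_eq_zero]
          exact Nat.factorial_ne_zero n
        field_simp
      rw [hfac]
    · -- n ≥ k
      rcases eq_or_lt_of_le h with heq | hlt2
      · -- n = k : the sum gives a multiple of M^(k+1) v = 0
        rw [if_neg (by omega)]
        symm
        have hr : ∀ l : Fin 5, M i l * (if n ≤ k then ((n.factorial:ℂ))⁻¹ * ((M^n).mulVec v) l else 0)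
            = ((n.factorial:ℂ))⁻¹ * (M i l * ((M^n).mulVec v) l) := by
          intro l
          rw [if_pos (le_of_eq heq.symm)]
          ring
        rw [Finset.sum_congr rfl (fun l _ => hr l), ← Finset.mul_sum]
        have hmv : ∑ l : Fin 5, M i l * ((M^n).mulVec v) l = ((M^(n+1)).mulVec v) i := by
          rw [← mulVec_apply', Matrix.mulVec_mulVec, ← pow_succ']
        rw [hmv]
        have hzz : M^(n+1) = 0 := by rw [← heq]; exact hk2
        rw [hzz, Matrix.zero_mulVec]
        simp
      · rw [if_neg (by omega)]
        symm
        rw [Finset.sum_eq_zero, zero_mul]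
        intro l _
        rw [if_neg (by omega), mul_zero]
  -- the gradient along the curve
  set un : Fin 5 → Polynomial ℂ := fun j => MvPolynomial.aeval γ (pderiv j f) with hun
  have hderiv_u : ∀ j, Polynomial.derivative (un j)
      = ∑ i : Fin 5, Polynomial.C (-(M i j)) * un i := by
    intro j
    rw [hun]
    simp only
    rw [derivative_aeval]
    have hterm : ∀ i : Fin 5,
        MvPolynomial.aeval γ (pderiv i (pderiv j f)) * Polynomial.derivative (γ i)
        = MvPolynomial.aeval γ
            ((∑ k' : Fin 5, MvPolynomial.C (M i k') * MvPolynomial.X k') * pderiv i (pderiv j f)) := by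
      intro i
      rw [map_mul, aeval_linear, hγderiv i, mul_comm]
    rw [Finset.sum_congr rfl (fun i _ => hterm i), ← map_sum]
    have hI : (∑ i : Fin 5, (∑ k' : Fin 5, MvPolynomial.C (M i k') * MvPolynomial.X k')
        * pderiv i (pderiv j f))
        = ∑ i : Fin 5, (- (MvPolynomial.C (M i j) * pderiv i f)) := by
      have h0 := I1 j
      rw [Finset.sum_add_distrib] at h0
      have := eq_neg_of_add_eq_zero_right h0
      rw [this]
      rw [← Finset.sum_neg_distrib]
    rw [hI, map_sum]
    refine Finset.sum_congr rfl fun i _ => ?_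
    rw [map_neg, map_mul, MvPolynomial.aeval_C, Polynomial.algebraMap_eq, map_neg, neg_mul]
  -- iterated derivatives
  have hiter : ∀ (n : ℕ) (j : Fin 5), (⇑Polynomial.derivative)^[n] (un j)
      = ∑ i : Fin 5, Polynomial.C ((((-(M.transpose))^n : Matrix (Fin 5) (Fin 5) ℂ)) j i) * un i := by
    intro n
    induction n with
    | zero =>
      intro j
      rw [Function.iterate_zero_apply, pow_zero]
      have hterm : ∀ i : Fin 5,
          Polynomial.C ((1 : Matrix (Fin 5) (Fin 5) ℂ) j i) * un i
            = if j = i then un i else 0 := by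
        intro i
        rw [Matrix.one_apply]
        split_ifs with h
        · rw [map_one, one_mul]
        · rw [map_zero, zero_mul]
      rw [Finset.sum_congr rfl (fun i _ => hterm i), Finset.sum_ite_eq Finset.univ j,
        if_pos (Finset.mem_univ j)]
    | succ n ih =>
      intro j
      rw [Function.iterate_succ_apply', ih j, map_sum]
      have hterm : ∀ i : Fin 5,
          Polynomial.derivative (Polynomial.C (((-(M.transpose))^n : Matrix (Fin 5) (Fin 5) ℂ) j i) * un i)
          = ∑ l : Fin 5, Polynomial.C (((-(M.transpose))^n : Matrix (Fin 5) (Fin 5) ℂ) j i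
              * ((-(M.transpose)) : Matrix (Fin 5) (Fin 5) ℂ) i l) * un l := by
        intro i
        rw [Polynomial.derivative_C_mul, hderiv_u i, Finset.mul_sum]
        refine Finset.sum_congr rfl fun l _ => ?_
        rw [← mul_assoc, ← map_mul]
        have hentry : ((-M.transpose : Matrix (Fin 5) (Fin 5) ℂ)) i l = -M l i := by
          simp [Matrix.transpose_apply]
        rw [hentry]
      rw [Finset.sum_congr rfl (fun i _ => hterm i), Finset.sum_comm]
      refine Finset.sum_congr rfl fun l _ => ?_
      rw [← Finset.sum_mul, ← map_sum, ← Matrix.mul_apply, ← pow_succ]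
  -- the (k+1)-st derivative vanishes
  have hzero : ∀ j, (⇑Polynomial.derivative)^[k+1] (un j) = 0 := by
    intro j
    rw [hiter (k+1) j]
    have hMt : ((-(M.transpose))^(k+1) : Matrix (Fin 5) (Fin 5) ℂ) = 0 := by
      rw [neg_pow, ← Matrix.transpose_pow, hk2, Matrix.transpose_zero, mul_zero]
    rw [hMt]
    apply Finset.sum_eq_zero
    intro i _
    rw [Matrix.zero_apply, map_zero, zero_mul]
  -- hence the coefficient of t^(2k) vanishes
  have hcoef : ∀ j, (un j).coeff (2*k) = 0 := by
    intro j
    have hcd := Polynomial.coeff_iterate_derivative (k := k+1) (un j) (k-1)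
    rw [hzero j, Polynomial.coeff_zero] at hcd
    have hidx : k - 1 + (k+1) = 2*k := by omega
    rw [hidx] at hcd
    have hdesc : (2*k).descFactorial (k+1) ≠ 0 := by
      rw [Ne, Nat.descFactorial_eq_zero_iff_lt]
      omega
    have := hcd.symm
    rw [nsmul_eq_mul] at this
    rcases mul_eq_zero.mp this with hc | hc
    · exact absurd (Nat.cast_eq_zero.mp hc) hdesc
    · exact hc
  -- top-coefficient extraction gives a singular point
  set b : Fin 5 → ℂ := fun i => (γ i).coeff k with hb
  have hbval : ∀ i, b i = ((k.factorial : ℂ))⁻¹ * a i := by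
    intro i
    rw [hb]
    simp only
    rw [hγcoeff i k, if_pos (le_refl k), haa]
  have hbne : b ≠ 0 := by
    intro h0
    apply hav
    funext i
    have := congrFun h0 i
    rw [hbval i] at this
    simp only [Pi.zero_apply] at this
    rcases mul_eq_zero.mp this with hc | hc
    · exact absurd hc (by
        simp only [ne_eq, inv_eq_zero, Nat.cast_eq_zero]
        exact Nat.factorial_ne_zero k)
    · rw [haa] at hc ⊢
      simp [hc]
  obtain ⟨j, hj⟩ := hsm b hbne
  apply hj
  have := hcoef j
  rw [hun] at this
  simp only at this
  rw [← coeff_aeval_of_isHomogeneous γ k hγdeg (hg j)]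
  exact this

/-- No linear syzygies among the partials of a smooth cubic. -/
lemma syz (f : P5) (hf : f.IsHomogeneous 3)
    (hsm : ∀ a : Fin 5 → ℂ, a ≠ 0 → ∃ i, MvPolynomial.eval a (pderiv i f) ≠ 0)
    (L : Fin 5 → P5) (hl : ∀ i, (L i).IsHomogeneous 1)
    (hid : ∑ i : Fin 5, L i * pderiv i f = 0) : ∀ i, L i = 0 := by
  classical
  set M : Matrix (Fin 5) (Fin 5) ℂ :=
    Matrix.of (fun i k => MvPolynomial.coeff (Finsupp.single k 1) (L i)) with hM
  have hrep : ∀ i, L i = ∑ k : Fin 5, MvPolynomial.C (M i k) * MvPolynomial.X k := fun i =>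
    linear_eq_sum_coeff (hl i)
  have hkey : M = 0 := by
    apply key f hf hsm M
    rw [← hid]
    exact Finset.sum_congr rfl fun i _ => by rw [← hrep i]
  intro i
  rw [hrep i, hkey]
  simp


/-- Case 1 in the proof of Theorem 5.4.  Let `f ∈ ℂ[x₀,…,x₄]` be
homogeneous of degree 3 whose partial derivatives have no common zero other than the origin,
and let `v₁ = f_{x₁}∂₀ − f_{x₀}∂₁ + f_{x₃}∂₂ − f_{x₂}∂₃`.  Let `ω = Σᵢ Aᵢ dxᵢ` be a
polynomial 1-form with homogeneous degree-2 coefficients and `ι_𝓡 ω = 0`.  If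
`ι_{v₁}(dω) = 0` — in coefficients, `Σᵢ v₁ᵢ (∂ᵢA_j − ∂_jAᵢ) = 0` for every `j` — then
`dω = 0` and consequently `ω = 0`. -/
theorem case1_contraction_v1_kills_omega (f : MvPolynomial (Fin 5) ℂ)
    (hf : f.IsHomogeneous 3)
    (hsm : ∀ a : Fin 5 → ℂ, a ≠ 0 → ∃ i, eval a (pderiv i f) ≠ 0)
    (A : Fin 5 → MvPolynomial (Fin 5) ℂ)
    (hA : ∀ i, (A i).IsHomogeneous 2)
    (hrad : ∑ i, X i * A i = 0)
    (hcontr : ∀ j : Fin 5,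
      ∑ i, (![pderiv 1 f, -(pderiv 0 f), pderiv 3 f, -(pderiv 2 f), 0] : Fin 5 → _) i
        * (pderiv i (A j) - pderiv j (A i)) = 0) :
    (∀ i j : Fin 5, pderiv i (A j) - pderiv j (A i) = 0) ∧ (∀ i, A i = 0) := by

  classical
  have hBhom : ∀ i j : Fin 5, (pderiv i (A j) - pderiv j (A i)).IsHomogeneous 1 := fun i j =>
    (pderiv_isHomogeneous (hA j) i).sub (pderiv_isHomogeneous (hA i) j)
  have hcore : ∀ j : Fin 5,
      (pderiv 0 (A j) - pderiv j (A 0)) = 0 ∧ (pderiv 1 (A j) - pderiv j (A 1)) = 0 ∧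
      (pderiv 2 (A j) - pderiv j (A 2)) = 0 ∧ (pderiv 3 (A j) - pderiv j (A 3)) = 0 := by
    intro j
    set L : Fin 5 → P5 := ![-(pderiv 1 (A j) - pderiv j (A 1)), (pderiv 0 (A j) - pderiv j (A 0)),
      -(pderiv 3 (A j) - pderiv j (A 3)), (pderiv 2 (A j) - pderiv j (A 2)), 0] with hL
    have hhom : ∀ i, (L i).IsHomogeneous 1 := by
      intro i
      fin_cases i
      · exact (hBhom 1 j).neg
      · exact hBhom 0 j
      · exact (hBhom 3 j).neg
      · exact hBhom 2 j
      · exact isHomogeneous_zero _ _ _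
    have hid : ∑ i : Fin 5, L i * pderiv i f = 0 := by
      have hc := hcontr j
      rw [Fin.sum_univ_five] at hc ⊢
      simp only [hL, Matrix.cons_val_zero, Matrix.cons_val_one, Matrix.head_cons,
        Matrix.cons_val_two, Matrix.tail_cons, Matrix.cons_val_three, Matrix.cons_val_four,
        Matrix.head_fin_const] at hc ⊢
      linear_combination hc
    have hz := syz f hf hsm L hhom hid
    refine ⟨?_, ?_, ?_, ?_⟩
    · have := hz 1
      simpa [hL] using this
    · have := hz 0
      rw [hL] at this
      simp only [Matrix.cons_val_zero] at this
      exact neg_eq_zero.mp this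
    · have := hz 3
      simpa [hL] using this
    · have := hz 2
      rw [hL] at this
      simp only [Matrix.cons_val_two, Matrix.tail_cons, Matrix.head_cons] at this
      exact neg_eq_zero.mp this
  have hB : ∀ j i : Fin 5, pderiv i (A j) - pderiv j (A i) = 0 := by
    intro j i
    fin_cases i
    · exact (hcore j).1
    · exact (hcore j).2.1
    · exact (hcore j).2.2.1
    · exact (hcore j).2.2.2
    · show pderiv (4 : Fin 5) (A j) - pderiv j (A 4) = 0
      have h1 : pderiv (4 : Fin 5) (A j) - pderiv j (A 4)
          = -(pderiv j (A 4) - pderiv (4 : Fin 5) (A j)) := by ring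
      rw [h1, neg_eq_zero]
      fin_cases j
      · exact (hcore 4).1
      · exact (hcore 4).2.1
      · exact (hcore 4).2.2.1
      · exact (hcore 4).2.2.2
      · exact sub_self _
  constructor
  · exact fun i j => hB j i
  · intro j
    have he : ∑ i : Fin 5, X i * pderiv i (A j) = C (2:ℂ) * A j := by
      have h2 := euler (hA j)
      norm_num at h2
      exact h2
    have hd : ∑ i : Fin 5, X i * pderiv j (A i) = - A j := by
      have h0 := congrArg (pderiv j) hrad
      rw [map_sum, map_zero] at h0
      have hterm : ∀ i : Fin 5, pderiv j (X i * A i)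
          = (if j = i then A i else 0) + X i * pderiv j (A i) := by
        intro i
        rw [pderiv_mul]
        congr 1
        rcases eq_or_ne j i with rfl | hji
        · rw [pderiv_X_self, if_pos rfl, one_mul]
        · rw [pderiv_X_of_ne (Ne.symm hji), if_neg hji, zero_mul]
      rw [Finset.sum_congr rfl (fun i _ => hterm i), Finset.sum_add_distrib,
        Finset.sum_ite_eq Finset.univ j, if_pos (Finset.mem_univ j)] at h0
      have := eq_neg_of_add_eq_zero_right h0
      linear_combination h0
    have hsum : ∑ i : Fin 5, X i * (pderiv i (A j) - pderiv j (A i)) = 0 :=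
      Finset.sum_eq_zero fun i _ => by rw [hB j i, mul_zero]
    have hexp : ∑ i : Fin 5, X i * (pderiv i (A j) - pderiv j (A i))
        = (∑ i : Fin 5, X i * pderiv i (A j)) - (∑ i : Fin 5, X i * pderiv j (A i)) := by
      rw [← Finset.sum_sub_distrib]
      exact Finset.sum_congr rfl fun i _ => by ring
    rw [hexp, he, hd] at hsum
    have hC : (C (3:ℂ) : P5) = C (2:ℂ) + 1 := by
      rw [show (3:ℂ) = 2 + 1 by norm_num, map_add, map_one]
    have h3 : (C (3:ℂ) : P5) * A j = 0 := by
      rw [hC]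
      linear_combination hsum
    have h3ne : (C (3:ℂ) : P5) ≠ 0 := by
      intro hcon
      have := MvPolynomial.C_injective (Fin 5) ℂ (by rw [hcon, map_zero] : C (3:ℂ) = (C 0 : P5))
      norm_num at this
    rcases mul_eq_zero.mp h3 with h | h
    · exact absurd h h3ne
    · exact h
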